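/- The sequence of functions g_n(x) = (2 − x) · ∏_{i=1}^{n} (1 + (1 − x)^(2^i)) converges uniformly to 1/x on every compact subset of the open interval (0, 2). -/

import Mathlib

open Filter

private lemma key_prod (x : ℝ) (n : ℕ) :
    x * ((2 - x) * ∏ i ∈ Finset.Icc 1 n, (1 + (1 - x) ^ (2 ^ i)))
      = 1 - (1 - x) ^ (2 ^ (n + 1)) := by
  induction n with
  | zero => simp; ring
  | succ n ih =>
    rw [Finset.prod_Icc_succ_top (by omega)]
    have h : x * ((2 - x) * ((∏ i ∈ Finset.Icc 1 n, (1 + (1 - x) ^ (2 ^ i))) *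
        (1 + (1 - x) ^ (2 ^ (n+1)))))
        = (x * ((2 - x) * ∏ i ∈ Finset.Icc 1 n, (1 + (1 - x) ^ (2 ^ i)))) *
          (1 + (1 - x) ^ (2 ^ (n+1))) := by ring
    rw [h, ih]
    have h2 : (2:ℕ) ^ (n + 2) = 2 ^ (n+1) * 2 := by ring
    rw [h2, pow_mul]
    ring

theorem stmt_4 (K : Set ℝ) (hK : IsCompact K) (hK' : K ⊆ Set.Ioo (0 : ℝ) 2) :
    TendstoUniformlyOn
      (fun (n : ℕ) (x : ℝ) => (2 - x) * ∏ i ∈ Finset.Icc 1 n, (1 + (1 - x) ^ (2 ^ i)))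
      (fun x => 1 / x) Filter.atTop K := by
  rcases K.eq_empty_or_nonempty with rfl | hne
  · exact tendstoUniformlyOn_empty
  -- min of x on K
  obtain ⟨a, haK, ha⟩ := hK.exists_isMinOn hne continuous_id.continuousOn
  obtain ⟨b, hbK, hb⟩ := hK.exists_isMaxOn hne (continuous_abs.comp (continuous_const.sub continuous_id)).continuousOn
  have ha0 : 0 < a := (hK' haK).1
  set r : ℝ := |1 - b| with hr
  have hr0 : 0 ≤ r := abs_nonneg _
  have hr1 : r < 1 := by
    rcases hK' hbK with ⟨hb1, hb2⟩
    rw [hr, abs_lt]; constructor <;> linarith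
  -- bound : ∀ x ∈ K, dist (1/x) (g n x) ≤ r^(2^(n+1)) / a
  have hbound : ∀ n, ∀ x ∈ K, dist (1/x) ((2 - x) * ∏ i ∈ Finset.Icc 1 n, (1 + (1 - x) ^ (2 ^ i))) ≤ r ^ (2 ^ (n+1)) / a := by
    intro n x hx
    have hx0 : 0 < x := (hK' hx).1
    have hgx : (2 - x) * ∏ i ∈ Finset.Icc 1 n, (1 + (1 - x) ^ (2 ^ i))
        = (1 - (1 - x) ^ (2 ^ (n + 1))) / x := by
      field_simp
      rw [mul_comm]
      linear_combination key_prod x n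
    rw [hgx, Real.dist_eq]
    have : 1/x - (1 - (1 - x) ^ (2 ^ (n + 1))) / x = (1 - x) ^ (2 ^ (n + 1)) / x := by
      field_simp
      ring
    rw [this, abs_div, abs_of_pos hx0, abs_pow]
    apply div_le_div₀ (by positivity) _ ha0 (ha hx)
    exact pow_le_pow_left₀ (abs_nonneg _) (hb hx) _
  -- r^(2^(n+1))/a → 0
  have htends : Tendsto (fun n : ℕ => r ^ (2 ^ (n+1)) / a) atTop (nhds 0) := by
    have h1 : Tendsto (fun n : ℕ => r ^ n) atTop (nhds 0) :=
      tendsto_pow_atTop_nhds_zero_of_lt_one hr0 hr1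
    have h2 : Tendsto (fun n : ℕ => 2 ^ (n+1)) atTop atTop :=
      (tendsto_pow_atTop_atTop_of_one_lt one_lt_two).comp (tendsto_add_atTop_nat 1)
    have := (h1.comp h2).div_const a
    simpa using this
  rw [Metric.tendstoUniformlyOn_iff]
  intro ε hε
  filter_upwards [htends.eventually (gt_mem_nhds hε)] with n hn x hx
  exact lt_of_le_of_lt (hbound n x hx) hn
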